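/- In the 4-dimensional algebra 3A'_{α,β} over a field of characteristic ≠ 2 (with α ≠ 1/2), the linear maps τ(a₀) and τ(a₁) — where τ(a_i) fixes a_i and s and swaps the other two basis idempotents — are algebra automorphisms, and their product τ(a₀)τ(a₁) has order 3. -/
import Mathlib


noncomputable section

/-- Index type for the basis `a₀, a₁, a₂` (as `some i`, `i : ZMod 3`) and `s`
(as `none`) of the algebra `3A'_{α,β}`. -/
abbrev I3 : Type := Option (ZMod 3)

/-- Basis vectors. -/
def e3 (F : Type*) [Field F] (k : I3) : I3 → F := Pi.single k 1

open scoped Classical in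
/-- The Ising fusion rules `Φ(α,β)` of Table 1. -/
def isingStar (F : Type*) [Field F] (α β : F) (μ ν : F) : Set F :=
  if μ = β then (if ν = β then {1, 0, α} else {β})
  else if ν = β then {β}
  else if μ = α then (if ν = α then {1, 0} else {α})
  else if ν = α then {α}
  else if μ = ν then {μ}
  else ∅

open scoped Classical in
/-- Structure constants of `3A'_{α,β}`, indices mod 3, `s = a₀∘a₁`. -/
def T3A (F : Type*) [Field F] (α β : F) : I3 → I3 → (I3 → F) :=
  fun i j =>
    match i, j with
    | some i, some j =>
        if i = j then e3 F (some i)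
        else β • (e3 F (some i) + e3 F (some j)) + e3 F none
    | some i, none =>
        ((3 * α ^ 3 - 5 * α ^ 2 * β + 8 * α * β ^ 2 - 4 * α ^ 2 + 7 * α * β
            - 4 * β ^ 2 + α - 2 * β) / (4 * (1 - 2 * α))) • e3 F (some i)
          + (β * (α - β) / 2) • (e3 F (some (i + 1)) + e3 F (some (i + 2)))
          + (α - β) • e3 F none
    | none, some j =>
        ((3 * α ^ 3 - 5 * α ^ 2 * β + 8 * α * β ^ 2 - 4 * α ^ 2 + 7 * α * β
            - 4 * β ^ 2 + α - 2 * β) / (4 * (1 - 2 * α))) • e3 F (some j)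
          + (β * (α - β) / 2) • (e3 F (some (j + 1)) + e3 F (some (j + 2)))
          + (α - β) • e3 F none
    | none, none =>
        ((α - β) * (3 * α ^ 3 - 13 * α ^ 2 * β + 16 * α * β ^ 2 - 4 * α ^ 2
            + 11 * α * β - 8 * β ^ 2 + α - 2 * β) / (8 * (1 - 2 * α))) •
          (∑ k : ZMod 3, e3 F (some k))
          + ((9 * α ^ 3 - 27 * α ^ 2 * β + 12 * α * β ^ 2 - 6 * α ^ 2
            + 13 * α * β - 6 * β ^ 2 + α) / (4 * (2 * α - 1))) • e3 F none

/-- The bilinear multiplication of `3A'_{α,β}`. -/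
def mul3A (F : Type*) [Field F] (α β : F) :
    (I3 → F) →ₗ[F] (I3 → F) →ₗ[F] (I3 → F) :=
  LinearMap.mk₂ F (fun x y => ∑ i : I3, ∑ j : I3, (x i * y j) • T3A F α β i j)
    (fun x x' y => by simp [add_mul, add_smul, Finset.sum_add_distrib])
    (fun c x y => by simp [Finset.smul_sum, smul_smul, mul_assoc])
    (fun x y y' => by simp [mul_add, add_smul, Finset.sum_add_distrib])
    (fun c x y => by simp [Finset.smul_sum, smul_smul, mul_left_comm])


theorem e3_swap' (F : Type*) [Field F] (σ : Equiv.Perm I3) (hσ : ∀ m, σ (σ m) = m) (a k : I3) :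
    e3 F (σ a) k = e3 F a (σ k) := by
  unfold e3
  rw [Pi.single_apply, Pi.single_apply]
  congr 1
  simp only [eq_iff_iff]
  constructor
  · rintro rfl; exact hσ a
  · rintro rfl; exact (hσ k).symm

theorem pairswap' (F : Type*) [Field F] (a b a' b' : I3)
    (h : a = a' ∧ b = b' ∨ a = b' ∧ b = a') (k : I3) :
    e3 F a k + e3 F b k = e3 F a' k + e3 F b' k := by
  rcases h with ⟨rfl, rfl⟩ | ⟨rfl, rfl⟩
  · rfl
  · exact add_comm _ _

theorem T3A_key (F : Type*) [Field F] (α β : F) (σ : Equiv.Perm I3) (g : Equiv.Perm (ZMod 3))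
    (hσ2 : ∀ m, σ (σ m) = m)
    (hnone : σ none = none)
    (hf : ∀ i, σ (some i) = some (g i))
    (hd : ∀ i : ZMod 3, (g i + 1 = g (i + 1) ∧ g i + 2 = g (i + 2)) ∨
        (g i + 1 = g (i + 2) ∧ g i + 2 = g (i + 1))) :
    ∀ i j k : I3, T3A F α β (σ i) (σ j) k = T3A F α β i j (σ k) := by
  have he : ∀ a k : I3, e3 F a (σ k) = e3 F (σ a) k := fun a k => (e3_swap' F σ hσ2 a k).symm
  have hginj : Function.Injective g := g.injective
  intro i j k
  rcases i with _ | i <;> rcases j with _ | j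
  · -- none none
    have hsum : (∑ t : ZMod 3, e3 F (some t) (σ k)) = ∑ t : ZMod 3, e3 F (some t) k :=
      calc ∑ t : ZMod 3, e3 F (some t) (σ k)
          = ∑ t : ZMod 3, e3 F (some (g t)) k :=
            Fintype.sum_congr _ _ (fun t => by rw [he (some t) k, hf])
        _ = ∑ t : ZMod 3, e3 F (some t) k := Equiv.sum_comp g (fun t => e3 F (some t) k)
    simp only [T3A, hnone, Pi.add_apply, Pi.smul_apply, Finset.sum_apply, smul_eq_mul]
    rw [he none k, hnone, hsum]
  · -- none, some j
    have hpair : e3 F (some (j + 1)) (σ k) + e3 F (some (j + 2)) (σ k)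
        = e3 F (some (g j + 1)) k + e3 F (some (g j + 2)) k := by
      rw [he (some (j+1)) k, he (some (j+2)) k, hf, hf]
      refine pairswap' F _ _ _ _ ?_ k
      rcases hd j with ⟨h1, h2⟩ | ⟨h1, h2⟩
      · exact Or.inl ⟨by rw [h1], by rw [h2]⟩
      · exact Or.inr ⟨by rw [h2], by rw [h1]⟩
    simp only [T3A, hnone, hf, Pi.add_apply, Pi.smul_apply, smul_eq_mul]
    rw [he (some j) k, hf, he none k, hnone, hpair]
  · -- some i, none
    have hpair : e3 F (some (i + 1)) (σ k) + e3 F (some (i + 2)) (σ k)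
        = e3 F (some (g i + 1)) k + e3 F (some (g i + 2)) k := by
      rw [he (some (i+1)) k, he (some (i+2)) k, hf, hf]
      refine pairswap' F _ _ _ _ ?_ k
      rcases hd i with ⟨h1, h2⟩ | ⟨h1, h2⟩
      · exact Or.inl ⟨by rw [h1], by rw [h2]⟩
      · exact Or.inr ⟨by rw [h2], by rw [h1]⟩
    simp only [T3A, hnone, hf, Pi.add_apply, Pi.smul_apply, smul_eq_mul]
    rw [he (some i) k, hf, he none k, hnone, hpair]
  · -- some some
    simp only [hf]
    by_cases hij : i = j
    · subst hij
      simp only [T3A, if_pos rfl, if_true]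
      rw [he (some i) k, hf]
    · have hgij : g i ≠ g j := fun h => hij (hginj h)
      simp only [T3A, if_neg hij, if_neg hgij, Pi.add_apply, Pi.smul_apply, smul_eq_mul]
      rw [he (some i) k, he (some j) k, he none k, hf, hf, hnone]

theorem key12 (F : Type*) [Field F] (α β : F) :
    ∀ i j k : I3, T3A F α β (Equiv.swap (some 1 : I3) (some 2) i)
        (Equiv.swap (some 1 : I3) (some 2) j) k
      = T3A F α β i j (Equiv.swap (some 1 : I3) (some 2) k) :=
  T3A_key F α β (Equiv.swap (some 1) (some 2)) (Equiv.swap 1 2)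
    (by decide) (by decide) (by decide) (by decide)

theorem key02 (F : Type*) [Field F] (α β : F) :
    ∀ i j k : I3, T3A F α β (Equiv.swap (some 0 : I3) (some 2) i)
        (Equiv.swap (some 0 : I3) (some 2) j) k
      = T3A F α β i j (Equiv.swap (some 0 : I3) (some 2) k) :=
  T3A_key F α β (Equiv.swap (some 0) (some 2)) (Equiv.swap 0 2)
    (by decide) (by decide) (by decide) (by decide)

theorem equivar (F : Type*) [Field F] (α β : F) (σ : Equiv.Perm I3)
    (hσ2 : ∀ m, σ (σ m) = m)
    (hkey : ∀ i j k : I3, T3A F α β (σ i) (σ j) k = T3A F α β i j (σ k))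
    (x y : I3 → F) :
    (LinearEquiv.funCongrLeft F F σ) (mul3A F α β x y) =
      mul3A F α β ((LinearEquiv.funCongrLeft F F σ) x) ((LinearEquiv.funCongrLeft F F σ) y) := by
  funext k
  show (mul3A F α β x y) (σ k) = (mul3A F α β (x ∘ σ) (y ∘ σ)) k
  simp only [mul3A, LinearMap.mk₂_apply, Finset.sum_apply, Pi.smul_apply, smul_eq_mul]
  refine Fintype.sum_equiv σ _ _ fun i => ?_
  refine Fintype.sum_equiv σ _ _ fun j => ?_
  simp only [Function.comp_apply, hσ2]
  rw [← hkey i j k]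

theorem hc3 : ∀ k : I3,
    Equiv.swap (some 0 : I3) (some 2) (Equiv.swap (some 1 : I3) (some 2)
      (Equiv.swap (some 0 : I3) (some 2) (Equiv.swap (some 1 : I3) (some 2)
        (Equiv.swap (some 0 : I3) (some 2) (Equiv.swap (some 1 : I3) (some 2) k))))) = k := by
  decide

theorem sw1 : Equiv.swap (some 1 : I3) (some 2) (some 2) = (some 1 : I3) := by decide
theorem sw2 : Equiv.swap (some 0 : I3) (some 2) (some 1) = (some 1 : I3) := by decide
theorem ne21 : (some 2 : I3) ≠ (some 1 : I3) := by decide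

theorem order_three (F : Type*) [Field F] :
    orderOf ((LinearEquiv.funCongrLeft F F (Equiv.swap (some 1 : I3) (some 2))) *
      (LinearEquiv.funCongrLeft F F (Equiv.swap (some 0 : I3) (some 2)))) = 3 := by
  haveI : Fact (Nat.Prime 3) := ⟨by norm_num⟩
  set P := (LinearEquiv.funCongrLeft F F (Equiv.swap (some 1 : I3) (some 2))) *
      (LinearEquiv.funCongrLeft F F (Equiv.swap (some 0 : I3) (some 2))) with hPdef
  have h3 : P ^ 3 = 1 := by
    rw [pow_succ, pow_succ, pow_one]
    exact LinearEquiv.ext fun x => funext fun k => congrArg x (hc3 k)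
  have hne : P ≠ 1 := by
    intro h
    have h0 : P (Pi.single (some 1 : I3) (1 : F)) (some 2) = (1 : F) := by
      have hr : P (Pi.single (some 1 : I3) (1 : F)) (some 2)
          = (Pi.single (some 1 : I3) (1 : F) : I3 → F)
            (Equiv.swap (some 0 : I3) (some 2) (Equiv.swap (some 1 : I3) (some 2) (some 2))) := rfl
      rw [hr, sw1, sw2, Pi.single_eq_same]
    rw [h] at h0
    have h0' : (Pi.single (some 1 : I3) (1 : F) : I3 → F) (some 2) = 1 := h0
    rw [Pi.single_apply, if_neg ne21] at h0'
    exact zero_ne_one h0'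
  exact orderOf_eq_prime h3 hne

theorem hinv12 : ∀ m : I3, Equiv.swap (some 1 : I3) (some 2)
    (Equiv.swap (some 1 : I3) (some 2) m) = m := by decide
theorem hinv02 : ∀ m : I3, Equiv.swap (some 0 : I3) (some 2)
    (Equiv.swap (some 0 : I3) (some 2) m) = m := by decide

/-- On `3A'_{α,β}` (field of characteristic ≠ 2, `α ≠ 1/2`, `α ≠ β`), the linear maps
`τ(a₀)` (swapping `a₁, a₂`, fixing `a₀` and `s`) and `τ(a₁)` (swapping `a₀, a₂`,
fixing `a₁` and `s`) are algebra automorphisms, and their product has order 3. -/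
theorem threeA_miyamoto (F : Type*) [Field F] (h2 : (2 : F) ≠ 0) (α β : F)
    (hα : α ≠ 1 / 2) (hαβ : α ≠ β) :
    (∀ x y : I3 → F,
      (LinearEquiv.funCongrLeft F F (Equiv.swap (some 1 : I3) (some 2)))
          (mul3A F α β x y) =
        mul3A F α β
          ((LinearEquiv.funCongrLeft F F (Equiv.swap (some 1 : I3) (some 2))) x)
          ((LinearEquiv.funCongrLeft F F (Equiv.swap (some 1 : I3) (some 2))) y)) ∧
    (∀ x y : I3 → F,
      (LinearEquiv.funCongrLeft F F (Equiv.swap (some 0 : I3) (some 2)))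
          (mul3A F α β x y) =
        mul3A F α β
          ((LinearEquiv.funCongrLeft F F (Equiv.swap (some 0 : I3) (some 2))) x)
          ((LinearEquiv.funCongrLeft F F (Equiv.swap (some 0 : I3) (some 2))) y)) ∧
    orderOf ((LinearEquiv.funCongrLeft F F (Equiv.swap (some 1 : I3) (some 2))) *
      (LinearEquiv.funCongrLeft F F (Equiv.swap (some 0 : I3) (some 2)))) = 3 := by
  exact ⟨fun x y => equivar F α β _ hinv12 (key12 F α β) x y,
    fun x y => equivar F α β _ hinv02 (key02 F α β) x y, order_three F⟩
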